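/- Let p, q, r be monic polynomials in ℤ[x] with p = q·r. Then p is weakly type 2 if and only if q and r are both weakly type 2 and at least one of them is type 2. -/

import Mathlib

open Polynomial

/-- A monic polynomial `p = Σ aᵢ x^(n-i)` in `ℤ[x]` is *type 2* if `2^i ∣ aᵢ`
for all `i ≥ 0`, i.e. `2^(n-j) ∣ coeff p j` for all `j ≤ n`. -/
def IsType2 (p : Polynomial ℤ) : Prop :=
  ∀ j ≤ p.natDegree, (2 : ℤ) ^ (p.natDegree - j) ∣ p.coeff j

/-- A monic polynomial `p = Σ aᵢ x^(n-i)` in `ℤ[x]` is *weakly type 2* if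
`2^(i-1) ∣ aᵢ` for all `i ≥ 1`, i.e. `2^(n-j-1) ∣ coeff p j` for all `j < n`. -/
def IsWeaklyType2 (p : Polynomial ℤ) : Prop :=
  ∀ j < p.natDegree, (2 : ℤ) ^ (p.natDegree - j - 1) ∣ p.coeff j

namespace WT2Aux

/-- coefficients of `p(2X)` -/
lemma coeff_comp_two (s : Polynomial ℤ) (i : ℕ) :
    (s.comp (C 2 * X)).coeff i = 2 ^ i * s.coeff i := by
  induction s using Polynomial.induction_on' with
  | add f g hf hg => simp only [add_comp, coeff_add, hf, hg, mul_add]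
  | monomial n a =>
    rw [monomial_comp, mul_pow, ← C_pow, mul_left_comm, ← mul_assoc, ← C_mul,
      coeff_C_mul_X_pow, coeff_monomial]
    rcases eq_or_ne i n with h | h
    · subst h; rw [if_pos rfl, if_pos rfl]
    · rw [if_neg h, if_neg (Ne.symm h), mul_zero]

/-- `2^k` divides the content of `p(2X)` iff it divides every `2^i aᵢ`. -/
lemma dvd_content_comp_iff (s : Polynomial ℤ) (k : ℕ) :
    (2 : ℤ) ^ k ∣ (s.comp (C 2 * X)).content ↔
      ∀ i, (2 : ℤ) ^ k ∣ 2 ^ i * s.coeff i := by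
  rw [dvd_content_iff_C_dvd, C_dvd_iff_dvd_coeff]
  simp_rw [coeff_comp_two]

lemma weaklyType2_iff (s : Polynomial ℤ) (hs : s.Monic) :
    IsWeaklyType2 s ↔ (2 : ℤ) ^ (s.natDegree - 1) ∣ (s.comp (C 2 * X)).content := by
  rw [dvd_content_comp_iff]
  constructor
  · intro h i
    rcases lt_trichotomy i s.natDegree with hi | hi | hi
    · have := h i hi
      calc (2:ℤ) ^ (s.natDegree - 1) = 2 ^ i * 2 ^ (s.natDegree - i - 1) := by
            rw [← pow_add]; congr 1; omega
        _ ∣ 2 ^ i * s.coeff i := mul_dvd_mul_left _ this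
    · subst hi
      rw [hs.coeff_natDegree, mul_one]
      exact pow_dvd_pow 2 (by omega)
    · rw [coeff_eq_zero_of_natDegree_lt hi]
      exact dvd_mul_of_dvd_right (dvd_zero _) _
  · intro h j hj
    have := h j
    have h2 : (2:ℤ) ^ j * 2 ^ (s.natDegree - j - 1) ∣ 2 ^ j * s.coeff j := by
      rw [← pow_add]
      refine dvd_trans (pow_dvd_pow 2 (by omega)) this
    exact (mul_dvd_mul_iff_left (a := (2:ℤ)^j) (by positivity)).mp h2

lemma type2_iff (s : Polynomial ℤ) (hs : s.Monic) :
    IsType2 s ↔ (2 : ℤ) ^ s.natDegree ∣ (s.comp (C 2 * X)).content := by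
  rw [dvd_content_comp_iff]
  constructor
  · intro h i
    rcases le_or_gt i s.natDegree with hi | hi
    · have := h i hi
      calc (2:ℤ) ^ s.natDegree = 2 ^ i * 2 ^ (s.natDegree - i) := by
            rw [← pow_add]; congr 1; omega
        _ ∣ 2 ^ i * s.coeff i := mul_dvd_mul_left _ this
    · rw [coeff_eq_zero_of_natDegree_lt hi]
      exact dvd_mul_of_dvd_right (dvd_zero _) _
  · intro h j hj
    have := h j
    have h2 : (2:ℤ) ^ j * 2 ^ (s.natDegree - j) ∣ 2 ^ j * s.coeff j := by
      rw [← pow_add]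
      refine dvd_trans (pow_dvd_pow 2 (by omega)) this
    exact (mul_dvd_mul_iff_left (a := (2:ℤ)^j) (by positivity)).mp h2

/-- the 2-adic valuation of the content of `s(2X)` -/
noncomputable def v (s : Polynomial ℤ) : ℕ :=
  ((s.comp (C 2 * X)).content).natAbs.factorization 2

lemma content_natAbs_ne_zero (s : Polynomial ℤ) (hs : s.Monic) :
    ((s.comp (C 2 * X)).content).natAbs ≠ 0 := by
  simp only [ne_eq, Int.natAbs_eq_zero, content_eq_zero_iff]
  intro h
  have := coeff_comp_two s s.natDegree
  rw [h, coeff_zero, hs.coeff_natDegree, mul_one] at this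
  exact (pow_ne_zero _ (by norm_num : (2:ℤ) ≠ 0)) this.symm

lemma pow_dvd_iff (s : Polynomial ℤ) (hs : s.Monic) (k : ℕ) :
    (2 : ℤ) ^ k ∣ (s.comp (C 2 * X)).content ↔ k ≤ v s := by
  rw [← Int.natAbs_dvd_natAbs, Int.natAbs_pow]
  exact Nat.Prime.pow_dvd_iff_le_factorization Nat.prime_two (content_natAbs_ne_zero s hs)

lemma v_le (s : Polynomial ℤ) (hs : s.Monic) : v s ≤ s.natDegree := by
  have h1 : (2:ℕ) ^ v s ∣ ((s.comp (C 2 * X)).content).natAbs := Nat.ordProj_dvd _ 2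
  have h2 : ((s.comp (C 2 * X)).content).natAbs ∣ 2 ^ s.natDegree := by
    have := content_dvd_coeff (p := s.comp (C 2 * X)) s.natDegree
    rw [coeff_comp_two, hs.coeff_natDegree, mul_one] at this
    have h3 := Int.natAbs_dvd_natAbs.mpr this
    simpa only [Int.natAbs_pow, Int.reduceAbs] using h3
  have := h1.trans h2
  exact (Nat.pow_dvd_pow_iff_le_right (by norm_num)).mp this

end WT2Aux

theorem weaklyType2_mul_iff (p q r : Polynomial ℤ)
    (hp : p.Monic) (hq : q.Monic) (hr : r.Monic) (hpqr : p = q * r) :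
    IsWeaklyType2 p ↔
      (IsWeaklyType2 q ∧ IsWeaklyType2 r) ∧ (IsType2 q ∨ IsType2 r) := by
  open WT2Aux in
  have hdeg : p.natDegree = q.natDegree + r.natDegree := by
    rw [hpqr]; exact hq.natDegree_mul hr
  have hvadd : v p = v q + v r := by
    unfold WT2Aux.v
    rw [hpqr, mul_comp, content_mul, Int.natAbs_mul,
      Nat.factorization_mul (content_natAbs_ne_zero q hq) (content_natAbs_ne_zero r hr)]
    rfl
  have hvq := v_le q hq
  have hvr := v_le r hr
  rw [weaklyType2_iff p hp, weaklyType2_iff q hq, weaklyType2_iff r hr,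
    type2_iff q hq, type2_iff r hr,
    pow_dvd_iff p hp, pow_dvd_iff q hq, pow_dvd_iff r hr,
    pow_dvd_iff q hq, pow_dvd_iff r hr]
  omega
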